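/- For X, Y ∈ gl_res the operators X₊₋Y₋₊ and Y₊₋X₋₊ are trace class, so the Schwinger term s(X,Y) := Tr(X₊₋Y₋₊ − Y₊₋X₋₊) is well defined; moreover s is bilinear and antisymmetric, the commutator [X,Y] again lies in gl_res, and s satisfies the 2-cocycle identity s([X,Y],Z) + s([Y,Z],X) + s([Z,X],Y) = 0 for all X, Y, Z ∈ gl_res. -/

import Mathlib

noncomputable section

variable {H : Type*} [NormedAddCommGroup H] [InnerProductSpace ℂ H] [CompleteSpace H]

/-- Hilbert–Schmidt operator (with respect to the Hilbert basis `b`). -/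
def IsHS {ι : Type*} (b : HilbertBasis ι ℂ H) (T : H →L[ℂ] H) : Prop :=
  Summable fun i => ‖T (b i)‖ ^ 2

/-- Trace-class operator: a product of two Hilbert–Schmidt operators. -/
def IsTC {ι : Type*} (b : HilbertBasis ι ℂ H) (T : H →L[ℂ] H) : Prop :=
  ∃ A B : H →L[ℂ] H, IsHS b A ∧ IsHS b B ∧ T = A * B

/-- The trace with respect to the Hilbert basis `b`. -/
def trB {ι : Type*} (b : HilbertBasis ι ℂ H) (T : H →L[ℂ] H) : ℂ :=
  ∑' i, (inner ℂ (b i) (T (b i)) : ℂ)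

/-- Membership in the restricted algebra `gl_res`: the commutator `[T, P]` is
Hilbert–Schmidt. -/
def InGlres {ι : Type*} (b : HilbertBasis ι ℂ H) (P T : H →L[ℂ] H) : Prop :=
  IsHS b (T * P - P * T)

/-- Membership in `L¹_res`: the diagonal blocks `T₊₊ = P T P`, `T₋₋ = (1-P) T (1-P)`
are trace class and the off-diagonal blocks `T₊₋ = P T (1-P)`, `T₋₊ = (1-P) T P`
are Hilbert–Schmidt. -/
def InL1res {ι : Type*} (b : HilbertBasis ι ℂ H) (P T : H →L[ℂ] H) : Prop :=
  IsTC b (P * T * P) ∧ IsTC b ((1 - P) * T * (1 - P)) ∧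
    IsHS b (P * T * (1 - P)) ∧ IsHS b ((1 - P) * T * P)

/-- The restricted trace `Tr_res T = Tr T₊₊ + Tr T₋₋`. -/
def trRes {ι : Type*} (b : HilbertBasis ι ℂ H) (P T : H →L[ℂ] H) : ℂ :=
  trB b (P * T * P) + trB b ((1 - P) * T * (1 - P))

/-- The Schwinger term `s(X,Y) = Tr(X₊₋Y₋₊ - Y₊₋X₋₊)`. -/
def schwinger {ι : Type*} (b : HilbertBasis ι ℂ H) (P X Y : H →L[ℂ] H) : ℂ :=
  trB b ((P * X * (1 - P)) * ((1 - P) * Y * P) - (P * Y * (1 - P)) * ((1 - P) * X * P))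

section helpers

set_option linter.unusedSectionVars false
set_option maxHeartbeats 1000000

variable {ι : Type*} {b : HilbertBasis ι ℂ H}

lemma parseval_sq (b : HilbertBasis ι ℂ H) (v : H) :
    HasSum (fun i => ‖(inner ℂ (b i) v : ℂ)‖ ^ 2) (‖v‖ ^ 2) := by
  have h := lp.hasSum_norm (E := fun _ : ι => ℂ) (p := 2) (by norm_num) (b.repr v)
  have h2 : ∀ x : ℝ, x ^ ((2:ENNReal)).toReal = x ^ 2 := by intro x; norm_num
  simp only [h2] at h
  simpa [HilbertBasis.repr_apply_apply] using h

lemma hasSum_op_sq (b : HilbertBasis ι ℂ H) (T : H →L[ℂ] H) (i : ι) :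
    HasSum (fun j => ‖(inner ℂ (b j) (T (b i)) : ℂ)‖ ^ 2) (‖T (b i)‖ ^ 2) :=
  parseval_sq b (T (b i))

lemma isHS_iff_double (b : HilbertBasis ι ℂ H) (T : H →L[ℂ] H) :
    IsHS b T ↔ Summable (fun p : ι × ι => ‖(inner ℂ (b p.2) (T (b p.1)) : ℂ)‖ ^ 2) := by
  rw [summable_prod_of_nonneg (by intro p; positivity)]
  constructor
  · intro h
    refine ⟨fun i => (hasSum_op_sq b T i).summable, ?_⟩
    exact h.congr fun i => ((hasSum_op_sq b T i).tsum_eq).symm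
  · rintro ⟨h1, h2⟩
    exact h2.congr fun i => (hasSum_op_sq b T i).tsum_eq

lemma IsHS.adjoint {T : H →L[ℂ] H} (hT : IsHS b T) :
    IsHS b (ContinuousLinearMap.adjoint T) := by
  rw [isHS_iff_double] at hT ⊢
  have h2 := (Equiv.prodComm ι ι).summable_iff.2 hT
  refine h2.congr fun p => ?_
  simp only [Function.comp, Equiv.prodComm_apply, Prod.fst_swap, Prod.snd_swap]
  rw [ContinuousLinearMap.adjoint_inner_right, ← norm_inner_symm]

lemma IsHS.mul_left {T : H →L[ℂ] H} (A : H →L[ℂ] H) (hT : IsHS b T) :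
    IsHS b (A * T) := by
  refine Summable.of_nonneg_of_le (fun i => by positivity) (fun i => ?_)
    (Summable.mul_left (‖A‖ ^ 2) hT)
  have h1 : ‖(A * T) (b i)‖ ≤ ‖A‖ * ‖T (b i)‖ := A.le_opNorm _
  have h2 : (0:ℝ) ≤ ‖(A * T) (b i)‖ := norm_nonneg _
  nlinarith [norm_nonneg (T (b i)), norm_nonneg A]

lemma IsHS.mul_right {T : H →L[ℂ] H} (A : H →L[ℂ] H) (hT : IsHS b T) :
    IsHS b (T * A) := by
  have h := (IsHS.mul_left (ContinuousLinearMap.adjoint A) hT.adjoint).adjoint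
  have e : ContinuousLinearMap.adjoint (ContinuousLinearMap.adjoint A *
      ContinuousLinearMap.adjoint T) = T * A := by
    rw [ContinuousLinearMap.mul_def, ContinuousLinearMap.adjoint_comp,
      ContinuousLinearMap.adjoint_adjoint, ContinuousLinearMap.adjoint_adjoint,
      ← ContinuousLinearMap.mul_def]
  rwa [e] at h

lemma IsHS.add {S T : H →L[ℂ] H} (hS : IsHS b S) (hT : IsHS b T) :
    IsHS b (S + T) := by
  refine Summable.of_nonneg_of_le (fun i => by positivity) (fun i => ?_)
    (Summable.mul_left 2 (Summable.add hS hT))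
  have h1 : ‖(S + T) (b i)‖ ≤ ‖S (b i)‖ + ‖T (b i)‖ := by
    simp only [ContinuousLinearMap.add_apply]; exact norm_add_le _ _
  have h2 : (0:ℝ) ≤ ‖(S + T) (b i)‖ := norm_nonneg _
  nlinarith [norm_nonneg (S (b i)), norm_nonneg (T (b i)),
    sq_nonneg (‖S (b i)‖ - ‖T (b i)‖)]

lemma IsHS.neg {T : H →L[ℂ] H} (hT : IsHS b T) : IsHS b (-T) := by
  unfold IsHS at *; simpa using hT

lemma IsHS.sub {S T : H →L[ℂ] H} (hS : IsHS b S) (hT : IsHS b T) :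
    IsHS b (S - T) := by
  have h := hS.add hT.neg; rwa [← sub_eq_add_neg] at h

lemma IsHS.smul {T : H →L[ℂ] H} (c : ℂ) (hT : IsHS b T) : IsHS b (c • T) := by
  have e : c • T = (c • (1 : H →L[ℂ] H)) * T := by simp [smul_mul_assoc]
  rw [e]; exact IsHS.mul_left _ hT

/-- Diagonal summability. -/
def SD (b : HilbertBasis ι ℂ H) (T : H →L[ℂ] H) : Prop :=
  Summable fun i => (inner ℂ (b i) (T (b i)) : ℂ)

lemma SD.mul {A B : H →L[ℂ] H} (hA : IsHS b A) (hB : IsHS b B) : SD b (A * B) := by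
  apply Summable.of_norm
  refine Summable.of_nonneg_of_le (fun i => norm_nonneg _) (fun i => ?_)
    (Summable.add hA.adjoint hB)
  have e1 : (inner ℂ (b i) ((A * B) (b i)) : ℂ) =
      inner ℂ ((ContinuousLinearMap.adjoint A) (b i)) (B (b i)) := by
    rw [ContinuousLinearMap.adjoint_inner_left, ContinuousLinearMap.mul_apply]
  rw [e1]
  have h2 := norm_inner_le_norm (𝕜 := ℂ) ((ContinuousLinearMap.adjoint A) (b i)) (B (b i))
  nlinarith [sq_nonneg (‖(ContinuousLinearMap.adjoint A) (b i)‖ - ‖B (b i)‖),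
    norm_nonneg ((ContinuousLinearMap.adjoint A) (b i)), norm_nonneg (B (b i))]

lemma SD.add {A B : H →L[ℂ] H} (hA : SD b A) (hB : SD b B) : SD b (A + B) := by
  have h := Summable.add hA hB
  refine h.congr fun i => ?_
  simp [inner_add_right]

lemma SD.neg {A : H →L[ℂ] H} (hA : SD b A) : SD b (-A) := by
  have h := Summable.neg hA
  refine h.congr fun i => ?_
  simp [inner_neg_right]

lemma SD.sub {A B : H →L[ℂ] H} (hA : SD b A) (hB : SD b B) : SD b (A - B) := by
  have h := hA.add hB.neg
  rwa [← sub_eq_add_neg] at h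

lemma trB_add {A B : H →L[ℂ] H} (hA : SD b A) (hB : SD b B) :
    trB b (A + B) = trB b A + trB b B := by
  unfold trB
  rw [← Summable.tsum_add hA hB]
  exact tsum_congr fun i => by simp [inner_add_right]

lemma trB_neg (A : H →L[ℂ] H) : trB b (-A) = -trB b A := by
  unfold trB
  rw [← tsum_neg]
  exact tsum_congr fun i => by simp [inner_neg_right]

lemma trB_sub {A B : H →L[ℂ] H} (hA : SD b A) (hB : SD b B) :
    trB b (A - B) = trB b A - trB b B := by
  rw [sub_eq_add_neg, trB_add hA hB.neg, trB_neg, ← sub_eq_add_neg]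

lemma trB_smul (c : ℂ) (A : H →L[ℂ] H) : trB b (c • A) = c * trB b A := by
  unfold trB
  rw [← tsum_mul_left]
  exact tsum_congr fun i => by simp [inner_smul_right]

lemma summable_cross {A B : H →L[ℂ] H} (hA : IsHS b A) (hB : IsHS b B) :
    Summable fun p : ι × ι =>
      (inner ℂ (b p.1) (A (b p.2)) : ℂ) * (inner ℂ (b p.2) (B (b p.1)) : ℂ) := by
  apply Summable.of_norm
  have hA2 : Summable fun p : ι × ι => ‖(inner ℂ (b p.1) (A (b p.2)) : ℂ)‖ ^ 2 := by
    have h := (isHS_iff_double b A).1 hA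
    have h2 := (Equiv.prodComm ι ι).summable_iff.2 h
    exact h2.congr fun p => rfl
  have hB2 : Summable fun p : ι × ι => ‖(inner ℂ (b p.2) (B (b p.1)) : ℂ)‖ ^ 2 :=
    (isHS_iff_double b B).1 hB
  refine Summable.of_nonneg_of_le (fun p => norm_nonneg _) (fun p => ?_)
    (hA2.add hB2)
  rw [norm_mul]
  nlinarith [sq_nonneg (‖(inner ℂ (b p.1) (A (b p.2)) : ℂ)‖ - ‖(inner ℂ (b p.2) (B (b p.1)) : ℂ)‖),
    norm_nonneg (inner ℂ (b p.1) (A (b p.2)) : ℂ), norm_nonneg (inner ℂ (b p.2) (B (b p.1)) : ℂ)]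

lemma trB_mul_eq_tsum {A B : H →L[ℂ] H} (hA : IsHS b A) (hB : IsHS b B) :
    trB b (A * B) = ∑' p : ι × ι,
      (inner ℂ (b p.1) (A (b p.2)) : ℂ) * (inner ℂ (b p.2) (B (b p.1)) : ℂ) := by
  have hf := summable_cross hA hB
  rw [Summable.tsum_prod' hf fun i => hf.prod_factor i]
  unfold trB
  refine tsum_congr fun i => ?_
  have h1 : (inner ℂ (b i) ((A * B) (b i)) : ℂ) =
      inner ℂ ((ContinuousLinearMap.adjoint A) (b i)) (B (b i)) := by
    rw [ContinuousLinearMap.adjoint_inner_left, ContinuousLinearMap.mul_apply]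
  rw [h1, ← HilbertBasis.tsum_inner_mul_inner b ((ContinuousLinearMap.adjoint A) (b i)) (B (b i))]
  refine tsum_congr fun j => ?_
  rw [ContinuousLinearMap.adjoint_inner_left]

lemma trB_mul_comm {A B : H →L[ℂ] H} (hA : IsHS b A) (hB : IsHS b B) :
    trB b (A * B) = trB b (B * A) := by
  rw [trB_mul_eq_tsum hA hB, trB_mul_eq_tsum hB hA]
  rw [← Equiv.tsum_eq (Equiv.prodComm ι ι)
    (fun p : ι × ι => (inner ℂ (b p.1) (B (b p.2)) : ℂ) * (inner ℂ (b p.2) (A (b p.1)) : ℂ))]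
  exact tsum_congr fun p => by simp [Equiv.prodComm_apply, mul_comm]

/-! ### Block lemmas -/

variable {P : H →L[ℂ] H}

lemma hs_offdiag_plus (hP : P * P = P) {X : H →L[ℂ] H}
    (hX : InGlres b P X) : IsHS b (P * X * (1 - P)) := by
  have hP2 : ∀ z : H →L[ℂ] H, P * (P * z) = P * z := fun z => by rw [← mul_assoc, hP]
  have e : P * X * (1 - P) = -(P * (X * P - P * X) * (1 - P)) := by
    simp only [mul_sub, sub_mul, mul_add, add_mul, mul_one, one_mul, mul_assoc, hP2, hP]
    abel
  rw [e]
  exact (IsHS.mul_right _ (IsHS.mul_left P hX)).neg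

lemma hs_offdiag_minus (hP : P * P = P) {X : H →L[ℂ] H}
    (hX : InGlres b P X) : IsHS b ((1 - P) * X * P) := by
  have hP2 : ∀ z : H →L[ℂ] H, P * (P * z) = P * z := fun z => by rw [← mul_assoc, hP]
  have e : (1 - P) * X * P = (1 - P) * (X * P - P * X) * P := by
    simp only [mul_sub, sub_mul, mul_add, add_mul, mul_one, one_mul, mul_assoc, hP2, hP]
    abel
  rw [e]
  exact IsHS.mul_right _ (IsHS.mul_left (1 - P) hX)

lemma trB_sum8 {T1 T2 T3 T4 T5 T6 T7 T8 : H →L[ℂ] H}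
    (h1 : SD b T1) (h2 : SD b T2) (h3 : SD b T3) (h4 : SD b T4)
    (h5 : SD b T5) (h6 : SD b T6) (h7 : SD b T7) (h8 : SD b T8) :
    trB b (T1 + T2 - T3 - T4 - T5 - T6 + T7 + T8) =
      trB b T1 + trB b T2 - trB b T3 - trB b T4 - trB b T5 - trB b T6 +
        trB b T7 + trB b T8 := by
  have s12 := h1.add h2
  have s3 := s12.sub h3
  have s4 := s3.sub h4
  have s5 := s4.sub h5
  have s6 := s5.sub h6
  have s7 := s6.add h7
  rw [trB_add s7 h8, trB_add s6 h7, trB_sub s5 h6, trB_sub s4 h5, trB_sub s3 h4,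
    trB_sub s12 h3, trB_add h1 h2]

/-- Expansion of the Schwinger term of a commutator into canonical triple traces. -/
lemma schw_comm (hP : P * P = P) {X Y Z : H →L[ℂ] H}
    (hX : InGlres b P X) (hY : InGlres b P Y) (hZ : InGlres b P Z) :
    schwinger b P (X * Y - Y * X) Z =
      trB b (((P*X*P) * (P*Y*(1-P))) * ((1-P)*Z*P))
      - trB b (((P*Y*P) * (P*X*(1-P))) * ((1-P)*Z*P))
      - trB b (((P*Y*P) * (P*Z*(1-P))) * ((1-P)*X*P))
      + trB b (((P*X*P) * (P*Z*(1-P))) * ((1-P)*Y*P))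
      + trB b ((((1-P)*Y*(1-P)) * ((1-P)*Z*P)) * (P*X*(1-P)))
      - trB b ((((1-P)*X*(1-P)) * ((1-P)*Z*P)) * (P*Y*(1-P)))
      - trB b ((((1-P)*X*(1-P)) * ((1-P)*Y*P)) * (P*Z*(1-P)))
      + trB b ((((1-P)*Y*(1-P)) * ((1-P)*X*P)) * (P*Z*(1-P))) := by
  have hP2 : ∀ z : H →L[ℂ] H, P * (P * z) = P * z := fun z => by rw [← mul_assoc, hP]
  have hbX := hs_offdiag_plus hP hX
  have hbY := hs_offdiag_plus hP hY
  have hbZ := hs_offdiag_plus hP hZ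
  have hcX := hs_offdiag_minus hP hX
  have hcY := hs_offdiag_minus hP hY
  have hcZ := hs_offdiag_minus hP hZ
  have e : (P * (X * Y - Y * X) * (1 - P)) * ((1 - P) * Z * P)
        - (P * Z * (1 - P)) * ((1 - P) * (X * Y - Y * X) * P)
      = ((P*X*P) * (P*Y*(1-P))) * ((1-P)*Z*P)
        + (P*X*(1-P)) * (((1-P)*Y*(1-P)) * ((1-P)*Z*P))
        - ((P*Y*P) * (P*X*(1-P))) * ((1-P)*Z*P)
        - (P*Y*(1-P)) * (((1-P)*X*(1-P)) * ((1-P)*Z*P))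
        - (P*Z*(1-P)) * (((1-P)*X*P) * (P*Y*P))
        - (P*Z*(1-P)) * (((1-P)*X*(1-P)) * ((1-P)*Y*P))
        + (P*Z*(1-P)) * (((1-P)*Y*P) * (P*X*P))
        + (P*Z*(1-P)) * (((1-P)*Y*(1-P)) * ((1-P)*X*P)) := by
    simp only [mul_sub, sub_mul, mul_add, add_mul, mul_one, one_mul, mul_assoc, hP2, hP]
    abel
  unfold schwinger
  rw [e]
  rw [trB_sum8
    (SD.mul (IsHS.mul_left (P*X*P) hbY) hcZ)
    (SD.mul hbX (IsHS.mul_left ((1-P)*Y*(1-P)) hcZ))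
    (SD.mul (IsHS.mul_left (P*Y*P) hbX) hcZ)
    (SD.mul hbY (IsHS.mul_left ((1-P)*X*(1-P)) hcZ))
    (SD.mul hbZ (IsHS.mul_right (P*Y*P) hcX))
    (SD.mul hbZ (IsHS.mul_left ((1-P)*X*(1-P)) hcY))
    (SD.mul hbZ (IsHS.mul_right (P*X*P) hcY))
    (SD.mul hbZ (IsHS.mul_left ((1-P)*Y*(1-P)) hcX))]
  -- rotate T2
  have r2 : trB b ((P*X*(1-P)) * (((1-P)*Y*(1-P)) * ((1-P)*Z*P))) =
      trB b ((((1-P)*Y*(1-P)) * ((1-P)*Z*P)) * (P*X*(1-P))) :=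
    trB_mul_comm hbX (IsHS.mul_left ((1-P)*Y*(1-P)) hcZ)
  -- rotate T4
  have r4 : trB b ((P*Y*(1-P)) * (((1-P)*X*(1-P)) * ((1-P)*Z*P))) =
      trB b ((((1-P)*X*(1-P)) * ((1-P)*Z*P)) * (P*Y*(1-P))) :=
    trB_mul_comm hbY (IsHS.mul_left ((1-P)*X*(1-P)) hcZ)
  -- rotate T5 : Tr(bZ (cX aY)) = Tr((aY bZ) cX)
  have r5 : trB b ((P*Z*(1-P)) * (((1-P)*X*P) * (P*Y*P))) =
      trB b (((P*Y*P) * (P*Z*(1-P))) * ((1-P)*X*P)) := by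
    rw [trB_mul_comm hbZ (IsHS.mul_right (P*Y*P) hcX), mul_assoc,
      trB_mul_comm hcX (IsHS.mul_left (P*Y*P) hbZ)]
  -- rotate T6
  have r6 : trB b ((P*Z*(1-P)) * (((1-P)*X*(1-P)) * ((1-P)*Y*P))) =
      trB b ((((1-P)*X*(1-P)) * ((1-P)*Y*P)) * (P*Z*(1-P))) :=
    trB_mul_comm hbZ (IsHS.mul_left ((1-P)*X*(1-P)) hcY)
  -- rotate T7
  have r7 : trB b ((P*Z*(1-P)) * (((1-P)*Y*P) * (P*X*P))) =
      trB b (((P*X*P) * (P*Z*(1-P))) * ((1-P)*Y*P)) := by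
    rw [trB_mul_comm hbZ (IsHS.mul_right (P*X*P) hcY), mul_assoc,
      trB_mul_comm hcY (IsHS.mul_left (P*X*P) hbZ)]
  -- rotate T8
  have r8 : trB b ((P*Z*(1-P)) * (((1-P)*Y*(1-P)) * ((1-P)*X*P))) =
      trB b ((((1-P)*Y*(1-P)) * ((1-P)*X*P)) * (P*Z*(1-P))) :=
    trB_mul_comm hbZ (IsHS.mul_left ((1-P)*Y*(1-P)) hcX)
  rw [r2, r4, r5, r6, r7, r8]
  ring

end helpers

/-- For `X, Y ∈ gl_res` the operators `X₊₋Y₋₊` and `Y₊₋X₋₊` are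
trace class, the Schwinger term `s` is bilinear and antisymmetric, `[X,Y] ∈ gl_res`,
and `s` satisfies the 2-cocycle identity. -/
theorem stmt7 [TopologicalSpace.SeparableSpace H]
    (P : H →L[ℂ] H) (hPsa : IsSelfAdjoint P) (hPidem : IsIdempotentElem P)
    {ι : Type*} (b : HilbertBasis ι ℂ H) :
    (∀ X Y : H →L[ℂ] H, InGlres b P X → InGlres b P Y →
      IsTC b ((P * X * (1 - P)) * ((1 - P) * Y * P)) ∧
      IsTC b ((P * Y * (1 - P)) * ((1 - P) * X * P))) ∧
    (∀ X X' Y : H →L[ℂ] H, InGlres b P X → InGlres b P X' → InGlres b P Y →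
      schwinger b P (X + X') Y = schwinger b P X Y + schwinger b P X' Y) ∧
    (∀ (c : ℂ) (X Y : H →L[ℂ] H), InGlres b P X → InGlres b P Y →
      schwinger b P (c • X) Y = c * schwinger b P X Y) ∧
    (∀ X Y Y' : H →L[ℂ] H, InGlres b P X → InGlres b P Y → InGlres b P Y' →
      schwinger b P X (Y + Y') = schwinger b P X Y + schwinger b P X Y') ∧
    (∀ (c : ℂ) (X Y : H →L[ℂ] H), InGlres b P X → InGlres b P Y →
      schwinger b P X (c • Y) = c * schwinger b P X Y) ∧
    (∀ X Y : H →L[ℂ] H, InGlres b P X → InGlres b P Y →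
      schwinger b P Y X = -schwinger b P X Y) ∧
    (∀ X Y : H →L[ℂ] H, InGlres b P X → InGlres b P Y →
      InGlres b P (X * Y - Y * X)) ∧
    (∀ X Y Z : H →L[ℂ] H, InGlres b P X → InGlres b P Y → InGlres b P Z →
      schwinger b P (X * Y - Y * X) Z + schwinger b P (Y * Z - Z * Y) X +
        schwinger b P (Z * X - X * Z) Y = 0) := by
  have hP : P * P = P := hPidem
  refine ⟨?_, ?_, ?_, ?_, ?_, ?_, ?_, ?_⟩
  · -- trace class
    intro X Y hX hY
    exact ⟨⟨_, _, hs_offdiag_plus hP hX, hs_offdiag_minus hP hY, rfl⟩,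
      ⟨_, _, hs_offdiag_plus hP hY, hs_offdiag_minus hP hX, rfl⟩⟩
  · -- additivity in first argument
    intro X X' Y hX hX' hY
    have hbX := hs_offdiag_plus hP hX
    have hbX' := hs_offdiag_plus hP hX'
    have hbY := hs_offdiag_plus hP hY
    have hcX := hs_offdiag_minus hP hX
    have hcX' := hs_offdiag_minus hP hX'
    have hcY := hs_offdiag_minus hP hY
    unfold schwinger
    have e : (P * (X + X') * (1-P)) * ((1-P) * Y * P) - (P * Y * (1-P)) * ((1-P) * (X + X') * P)
        = ((P * X * (1-P)) * ((1-P) * Y * P) - (P * Y * (1-P)) * ((1-P) * X * P))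
          + ((P * X' * (1-P)) * ((1-P) * Y * P) - (P * Y * (1-P)) * ((1-P) * X' * P)) := by
      noncomm_ring
    rw [e, trB_add ((SD.mul hbX hcY).sub (SD.mul hbY hcX))
      ((SD.mul hbX' hcY).sub (SD.mul hbY hcX'))]
  · -- scalar in first argument
    intro c X Y _ _
    unfold schwinger
    have e : (P * (c • X) * (1-P)) * ((1-P) * Y * P) - (P * Y * (1-P)) * ((1-P) * (c • X) * P)
        = c • ((P * X * (1-P)) * ((1-P) * Y * P) - (P * Y * (1-P)) * ((1-P) * X * P)) := by
      simp only [mul_smul_comm, smul_mul_assoc, smul_sub]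
    rw [e, trB_smul]
  · -- additivity in second argument
    intro X Y Y' hX hY hY'
    have hbX := hs_offdiag_plus hP hX
    have hbY := hs_offdiag_plus hP hY
    have hbY' := hs_offdiag_plus hP hY'
    have hcX := hs_offdiag_minus hP hX
    have hcY := hs_offdiag_minus hP hY
    have hcY' := hs_offdiag_minus hP hY'
    unfold schwinger
    have e : (P * X * (1-P)) * ((1-P) * (Y + Y') * P) - (P * (Y + Y') * (1-P)) * ((1-P) * X * P)
        = ((P * X * (1-P)) * ((1-P) * Y * P) - (P * Y * (1-P)) * ((1-P) * X * P))
          + ((P * X * (1-P)) * ((1-P) * Y' * P) - (P * Y' * (1-P)) * ((1-P) * X * P)) := by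
      noncomm_ring
    rw [e, trB_add ((SD.mul hbX hcY).sub (SD.mul hbY hcX))
      ((SD.mul hbX hcY').sub (SD.mul hbY' hcX))]
  · -- scalar in second argument
    intro c X Y _ _
    unfold schwinger
    have e : (P * X * (1-P)) * ((1-P) * (c • Y) * P) - (P * (c • Y) * (1-P)) * ((1-P) * X * P)
        = c • ((P * X * (1-P)) * ((1-P) * Y * P) - (P * Y * (1-P)) * ((1-P) * X * P)) := by
      simp only [mul_smul_comm, smul_mul_assoc, smul_sub]
    rw [e, trB_smul]
  · -- antisymmetry
    intro X Y _ _
    unfold schwinger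
    rw [← neg_sub ((P * X * (1-P)) * ((1-P) * Y * P)) ((P * Y * (1-P)) * ((1-P) * X * P)),
      trB_neg]
  · -- commutator stays in gl_res
    intro X Y hX hY
    unfold InGlres
    have e : (X * Y - Y * X) * P - P * (X * Y - Y * X)
        = X * (Y * P - P * Y) + (X * P - P * X) * Y
          - Y * (X * P - P * X) - (Y * P - P * Y) * X := by
      noncomm_ring
    rw [e]
    exact (((IsHS.mul_left X hY).add (IsHS.mul_right Y hX)).sub
      (IsHS.mul_left Y hX)).sub (IsHS.mul_right X hY)
  · -- 2-cocycle identity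
    intro X Y Z hX hY hZ
    rw [schw_comm hP hX hY hZ, schw_comm hP hY hZ hX, schw_comm hP hZ hX hY]
    ring

end
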